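/- arXiv:2412.07994 — 2 statements merged into one kernel-verified Lean document; each statement's English description precedes it below -/
import Mathlib

section
/- Let G be a group generated by a finite symmetric set with word length ℓ and H ≤ G a subgroup, and suppose that the quasi-regular representation is weakly contained in the regular one, in the sense that ‖λ_{G/H}(f)‖ ≤ ‖f‖_* for every finitely supported f : G → ℂ. Then ‖f‖_* = ‖f‖_h for every finitely supported f : G → ℝ with nonnegative values; and if moreover G has the rapid decay property, then the pair (G,H) has the rapid decay property. -/
open scoped BigOperators

attribute [local instance] Classical.propDecidable

section Defs

variable {G : Type*} [Group G]

/-- Word length with respect to a generating set `S`. -/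
noncomputable def wordLength (S : Set G) (x : G) : ℕ :=
  sInf {n | ∃ l : List G, (∀ s ∈ l, s ∈ S) ∧ l.length = n ∧ l.prod = x}

/-- Convolution of finitely supported functions:
`(f * ϕ) x = ∑ z, f z * ϕ (z⁻¹ * x)`. -/
noncomputable def conv {k : Type*} [Semiring k] (f ϕ : G →₀ k) : G →₀ k :=
  f.sum fun z c => c • Finsupp.mapDomain (fun x => z * x) ϕ

/-- `n`-fold convolution power. -/
noncomputable def convPow {k : Type*} [Semiring k] (f : G →₀ k) : ℕ → G →₀ k
  | 0 => Finsupp.single 1 1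
  | n + 1 => conv f (convPow f n)

/-- ℓ² norm of a finitely supported function. -/
noncomputable def l2Norm {α k : Type*} [NormedAddCommGroup k] (f : α →₀ k) : ℝ :=
  Real.sqrt (∑ x ∈ f.support, ‖f x‖ ^ 2)

/-- ℓ¹ norm of a finitely supported function. -/
noncomputable def l1Norm {α k : Type*} [NormedAddCommGroup k] (f : α →₀ k) : ℝ :=
  ∑ x ∈ f.support, ‖f x‖

/-- The hybrid `(2,1)` norm with respect to the subgroup `H`:
`‖f‖_{(2,1)} = sqrt (∑_{gH ∈ G/H} (∑_{x ∈ gH} |f x|)²)`. -/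
noncomputable def l21Norm (H : Subgroup G) {k : Type*} [NormedAddCommGroup k]
    (f : G →₀ k) : ℝ :=
  l2Norm (Finsupp.mapDomain (QuotientGroup.mk : G → G ⧸ H) (f.mapRange norm norm_zero))

/-- Hybrid operator norm `‖f‖_h`. -/
noncomputable def hybridOpNorm (H : Subgroup G) (f : G →₀ ℂ) : ℝ :=
  sSup {c : ℝ | ∃ ϕ : G →₀ ℂ, l21Norm H ϕ ≤ 1 ∧ c = l21Norm H (conv f ϕ)}

/-- Regular operator norm `‖f‖_*`. -/
noncomputable def regOpNorm (f : G →₀ ℂ) : ℝ :=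
  sSup {c : ℝ | ∃ ξ : G →₀ ℂ, l2Norm ξ ≤ 1 ∧ c = l2Norm (conv f ξ)}

/-- The quasi-regular representation:
`(λ_{G/H}(f) ξ)(gH) = ∑ z, f z * ξ (z⁻¹ g H)`. -/
noncomputable def quasiReg (H : Subgroup G) (f : G →₀ ℂ) (ξ : (G ⧸ H) →₀ ℂ) :
    (G ⧸ H) →₀ ℂ :=
  f.sum fun z c => c • Finsupp.mapDomain (fun q => z • q) ξ

/-- Quasi-regular operator norm `‖λ_{G/H}(f)‖`. -/
noncomputable def quasiRegOpNorm (H : Subgroup G) (f : G →₀ ℂ) : ℝ :=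
  sSup {c : ℝ | ∃ ξ : (G ⧸ H) →₀ ℂ, l2Norm ξ ≤ 1 ∧ c = l2Norm (quasiReg H f ξ)}

/-- Embed a real finitely supported function into the complex valued ones. -/
noncomputable def toC {α : Type*} (f : α →₀ ℝ) : α →₀ ℂ :=
  f.mapRange Complex.ofReal Complex.ofReal_zero

/-- Pointwise weight of a function by `(1 + ℓ)^s`. -/
noncomputable def weight (S : Set G) (s : ℝ) (f : G →₀ ℂ) : G →₀ ℂ where
  support := f.support
  toFun x := ((((1 : ℝ) + (wordLength S x : ℝ)) ^ s : ℝ) : ℂ) * f x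
  mem_support_toFun x := by
    simp only [Finsupp.mem_support_iff]
    have hpos : (0 : ℝ) < ((1 : ℝ) + (wordLength S x : ℝ)) ^ s :=
      Real.rpow_pos_of_pos (by positivity) s
    constructor
    · intro hf h
      rcases mul_eq_zero.mp h with h1 | h2
      · exact hpos.ne' (by exact_mod_cast h1)
      · exact hf h2
    · intro h hf
      exact h (by rw [hf, mul_zero])

/-- The involution `f⋆ x = f x⁻¹`. -/
noncomputable def starFun {k : Type*} [Zero k] (f : G →₀ k) : G →₀ k :=
  Finsupp.equivMapDomain (Equiv.inv G) f

/-- Sum of the values of `g` over the subgroup `H`. -/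
noncomputable def sumOverSubgroup (H : Subgroup G) (g : G →₀ ℝ) : ℝ :=
  ∑ x ∈ g.support.filter (fun x => x ∈ H), g x

/-- `f` is supported in the ball of radius `R` for the word length of `S`. -/
def supportedInBall (S : Set G) (R : ℕ) {k : Type*} [Zero k] (f : G →₀ k) : Prop :=
  ∀ x ∈ f.support, wordLength S x ≤ R

/-- Rapid decay property for the pair `(G, H)`. -/
def PairRD (S : Set G) (H : Subgroup G) : Prop :=
  ∃ C : ℝ, ∃ D : ℕ, 0 ≤ C ∧ ∀ (R : ℕ) (f ϕ : G →₀ ℂ), supportedInBall S R f →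
    l21Norm H (conv f ϕ) ≤ C * ((R : ℝ) + 1) ^ D * l21Norm H f * l21Norm H ϕ

/-- Rapid decay property for the group `G`. -/
def GroupRD (S : Set G) : Prop :=
  ∃ C : ℝ, ∃ D : ℕ, 0 ≤ C ∧ ∀ (R : ℕ) (f ϕ : G →₀ ℂ), supportedInBall S R f →
    l2Norm (conv f ϕ) ≤ C * ((R : ℝ) + 1) ^ D * l2Norm f * l2Norm ϕ

/-- Polynomial growth of a subgroup for the induced length. -/
def polyGrowthSubgroup (S : Set G) (H : Subgroup G) : Prop :=
  ∃ C : ℝ, ∃ D : ℕ, 0 ≤ C ∧ ∀ R : ℕ,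
    (Set.ncard {x : G | x ∈ H ∧ wordLength S x ≤ R} : ℝ) ≤ C * ((R : ℝ) + 1) ^ D

/-- Polynomial growth of the coset space `G/H`. -/
def polyGrowthQuotient (S : Set G) (H : Subgroup G) : Prop :=
  ∃ C : ℝ, ∃ D : ℕ, 0 ≤ C ∧ ∀ R : ℕ,
    (Set.ncard ((QuotientGroup.mk : G → G ⧸ H) '' {x : G | wordLength S x ≤ R}) : ℝ) ≤
      C * ((R : ℝ) + 1) ^ D

/-- Co-amenability of `H` in `G`: Følner condition for the left action on `G/H`. -/
def Coamenable (H : Subgroup G) : Prop :=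
  ∀ ε : ℝ, 0 < ε → ∀ F : Finset G, ∃ V : Finset (G ⧸ H), V.Nonempty ∧
    ((symmDiff (Finset.image₂ (· • ·) F V) V).card : ℝ) ≤ ε * (V.card : ℝ)

/-- Matrix coefficient `⟨λ_{G/H}(γ) ξ, η⟩` of the quasi-regular representation
on `ℓ²(G/H)`. -/
noncomputable def qrCoeff (H : Subgroup G) (γ : G)
    (ξ η : lp (fun _ : G ⧸ H => ℂ) 2) : ℂ :=
  ∑' q : G ⧸ H, ξ (γ⁻¹ • q) * (starRingEnd ℂ) (η q)

/-- The spectral radius of the random walk induced on `G/H`: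
`ρ = limsup P_{2n}(H,H)^{1/(2n)}`. -/
noncomputable def specRadQuot (H : Subgroup G) (μ : G →₀ ℝ) : ℝ :=
  Filter.limsup (fun n : ℕ =>
    (sumOverSubgroup H (convPow μ (2 * n))) ^ ((1 : ℝ) / (2 * (n : ℝ)))) Filter.atTop

end Defs
section Aux

open Finset ComplexOrder

variable {α β ι : Type*} {k : Type*} [NormedAddCommGroup k]

lemma l2Norm_nonneg (g : α →₀ k) : 0 ≤ l2Norm g := Real.sqrt_nonneg _

lemma l2Norm_eq_sum (g : α →₀ k) {s : Finset α} (hs : g.support ⊆ s) :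
    l2Norm g = Real.sqrt (∑ x ∈ s, ‖g x‖ ^ 2) := by
  unfold l2Norm
  rw [Finset.sum_subset hs]
  intro x _ hx
  simp [Finsupp.notMem_support_iff.mp hx]

lemma l2Norm_zero : l2Norm (0 : α →₀ k) = 0 := by
  simp [l2Norm]

lemma l2Norm_mono {k₂ : Type*} [NormedAddCommGroup k₂] (g : α →₀ k) (h : α →₀ k₂)
    (hgh : ∀ x, ‖g x‖ ≤ ‖h x‖) : l2Norm g ≤ l2Norm h := by
  rw [l2Norm_eq_sum g (Finset.subset_union_left (s₂ := h.support)),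
    l2Norm_eq_sum h (Finset.subset_union_right (s₁ := g.support))]
  apply Real.sqrt_le_sqrt
  exact Finset.sum_le_sum fun x _ => pow_le_pow_left₀ (norm_nonneg _) (hgh x) 2

lemma l2Norm_smul (c : ℂ) (g : α →₀ ℂ) : l2Norm (c • g) = ‖c‖ * l2Norm g := by
  rw [l2Norm_eq_sum (c • g) (Finsupp.support_smul), l2Norm]
  have h1 : ∀ x : α, ‖(c • g) x‖ ^ 2 = ‖c‖ ^ 2 * ‖g x‖ ^ 2 := by
    intro x
    rw [Finsupp.smul_apply, smul_eq_mul, norm_mul]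
    ring
  rw [Finset.sum_congr rfl fun x _ => h1 x, ← Finset.mul_sum,
    Real.sqrt_mul (sq_nonneg _), Real.sqrt_sq (norm_nonneg _)]

lemma l2Norm_mapDomain_inj {π : α → β} (hπ : Function.Injective π) (g : α →₀ k) :
    l2Norm (Finsupp.mapDomain π g) = l2Norm g := by
  classical
  have hs : (Finsupp.mapDomain π g).support ⊆ g.support.image π := Finsupp.mapDomain_support
  rw [l2Norm_eq_sum _ hs, Finset.sum_image (fun x _ y _ h => hπ h)]
  unfold l2Norm
  congr 1
  exact Finset.sum_congr rfl fun x _ => by rw [Finsupp.mapDomain_apply hπ]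

lemma l2Norm_sum_le (t : Finset ι) (g : ι → α →₀ ℂ) :
    l2Norm (∑ i ∈ t, g i) ≤ ∑ i ∈ t, l2Norm (g i) := by
  classical
  set s : Finset α := t.biUnion fun i => (g i).support with hsdef
  have hsub : ∀ i ∈ t, (g i).support ⊆ s := fun i hi => Finset.subset_biUnion_of_mem (fun j => (g j).support) hi
  have hsum : (∑ i ∈ t, g i).support ⊆ s := Finsupp.support_finset_sum
  set E : (α →₀ ℂ) → EuclideanSpace ℂ {x // x ∈ s} := fun v => WithLp.toLp 2 (fun x => v ↑x) with hE
  have key : ∀ v : α →₀ ℂ, v.support ⊆ s → l2Norm v = ‖E v‖ := by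
    intro v hv
    rw [l2Norm_eq_sum v hv, ← Finset.sum_coe_sort s (fun x => ‖v x‖ ^ 2)]
    exact (EuclideanSpace.norm_eq (E v)).symm
  rw [key _ hsum]
  have hadd : E (∑ i ∈ t, g i) = ∑ i ∈ t, E (g i) := by
    ext x
    rw [hE]
    simp only [Finsupp.finset_sum_apply, WithLp.ofLp_sum, Finset.sum_apply, WithLp.ofLp_toLp]
  rw [hadd]
  refine (norm_sum_le _ _).trans ?_
  exact Finset.sum_le_sum fun i hi => le_of_eq (key _ (hsub i hi)).symm

lemma normC_eq {z : ℂ} (hz : 0 ≤ z) : ‖z‖ = z.re := by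
  obtain ⟨h1, h2⟩ := Complex.nonneg_iff.mp hz
  have hz' : z = (z.re : ℂ) := Complex.ext rfl h2.symm
  calc ‖z‖ = ‖(z.re : ℂ)‖ := by rw [← hz']
    _ = |z.re| := by rw [Complex.norm_real, Real.norm_eq_abs]
    _ = z.re := abs_of_nonneg h1

lemma norm_sum_of_nonneg {s : Finset ι} {g : ι → ℂ} (h : ∀ i ∈ s, 0 ≤ g i) :
    ‖∑ i ∈ s, g i‖ = ∑ i ∈ s, ‖g i‖ := by
  rw [normC_eq (Finset.sum_nonneg h), Complex.re_sum]
  exact Finset.sum_congr rfl fun i hi => (normC_eq (h i hi)).symm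

/-- Pointwise absolute value, as a ℂ-valued finitely supported function. -/
noncomputable def absC (g : α →₀ ℂ) : α →₀ ℂ :=
  g.mapRange (fun z => (‖z‖ : ℂ)) (by simp)

@[simp] lemma absC_apply (g : α →₀ ℂ) (x : α) : absC g x = (‖g x‖ : ℂ) :=
  Finsupp.mapRange_apply

lemma absC_nonneg (g : α →₀ ℂ) (x : α) : 0 ≤ absC g x := by
  rw [absC_apply]
  exact_mod_cast norm_nonneg (g x)

@[simp] lemma norm_absC (g : α →₀ ℂ) (x : α) : ‖absC g x‖ = ‖g x‖ := by
  rw [absC_apply, Complex.norm_real, norm_norm]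

lemma support_absC (g : α →₀ ℂ) : (absC g).support = g.support := by
  ext x
  simp [Finsupp.mem_support_iff]

lemma l2Norm_absC (g : α →₀ ℂ) : l2Norm (absC g) = l2Norm g := by
  rw [l2Norm_eq_sum (absC g) (le_of_eq (support_absC g))]
  unfold l2Norm
  congr 1
  exact Finset.sum_congr rfl fun x _ => by rw [norm_absC]

lemma l1Norm_absC (g : α →₀ ℂ) : l1Norm (absC g) = l1Norm g := by
  unfold l1Norm
  rw [support_absC]
  exact Finset.sum_congr rfl fun x _ => by rw [norm_absC]

lemma l1Norm_nonneg (g : α →₀ k) : 0 ≤ l1Norm g :=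
  Finset.sum_nonneg fun x _ => norm_nonneg _

lemma mapDomain_apply_eq {M : Type*} [AddCommMonoid M] (π : α → β) (g : α →₀ M) {s : Finset α}
    (hs : g.support ⊆ s) (y : β) :
    Finsupp.mapDomain π g y = ∑ x ∈ s, if π x = y then g x else 0 := by
  classical
  have h1 : Finsupp.mapDomain π g y = ∑ x ∈ g.support, if π x = y then g x else 0 := by
    rw [Finsupp.mapDomain, Finsupp.sum_apply, Finsupp.sum]
    exact Finset.sum_congr rfl fun x _ => Finsupp.single_apply
  rw [h1]
  apply Finset.sum_subset hs
  intro x _ hx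
  simp [Finsupp.notMem_support_iff.mp hx]

lemma absC_mapDomain_inj {π : α → β} (hπ : Function.Injective π) (g : α →₀ ℂ) :
    absC (Finsupp.mapDomain π g) = Finsupp.mapDomain π (absC g) := by
  ext y
  by_cases hy : y ∈ Set.range π
  · obtain ⟨x, rfl⟩ := hy
    rw [absC_apply, Finsupp.mapDomain_apply hπ, Finsupp.mapDomain_apply hπ, absC_apply]
  · rw [absC_apply, Finsupp.mapDomain_notin_range _ _ hy, Finsupp.mapDomain_notin_range _ _ hy]
    simp

variable {G : Type*} [Group G] {H : Subgroup G}

local notation "π" => (QuotientGroup.mk : G → G ⧸ H)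

lemma conv_apply (f ϕ : G →₀ ℂ) (x : G) :
    conv f ϕ x = ∑ z ∈ f.support, f z * ϕ (z⁻¹ * x) := by
  rw [conv, Finsupp.sum_apply, Finsupp.sum]
  refine Finset.sum_congr rfl fun z _ => ?_
  rw [Finsupp.smul_apply, smul_eq_mul]
  congr 1
  have h1 := Finsupp.mapDomain_apply (mul_right_injective z) ϕ (z⁻¹ * x)
  simpa using h1

lemma quasiReg_apply (f : G →₀ ℂ) (ξ : (G ⧸ H) →₀ ℂ) (q : G ⧸ H) :
    quasiReg H f ξ q = ∑ z ∈ f.support, f z * ξ (z⁻¹ • q) := by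
  rw [quasiReg, Finsupp.sum_apply, Finsupp.sum]
  refine Finset.sum_congr rfl fun z _ => ?_
  rw [Finsupp.smul_apply, smul_eq_mul]
  congr 1
  have hinj : Function.Injective (fun p : G ⧸ H => z • p) := MulAction.injective z
  have h1 := Finsupp.mapDomain_apply hinj ξ (z⁻¹ • q)
  simpa using h1

lemma mapDomain_conv (f ϕ : G →₀ ℂ) :
    Finsupp.mapDomain π (conv f ϕ) = quasiReg H f (Finsupp.mapDomain π ϕ) := by
  rw [conv, quasiReg, Finsupp.sum, Finsupp.sum, Finsupp.mapDomain_finset_sum]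
  refine Finset.sum_congr rfl fun z _ => ?_
  rw [Finsupp.mapDomain_smul, ← Finsupp.mapDomain_comp, ← Finsupp.mapDomain_comp]
  have hcomp : (π ∘ fun x => z * x) = ((fun p : G ⧸ H => z • p) ∘ π) := by
    funext x
    exact (MulAction.Quotient.smul_mk H z x).symm
  rw [hcomp]

lemma conv_zero (f : G →₀ ℂ) : conv f (0 : G →₀ ℂ) = 0 := by
  rw [conv]
  simp [Finsupp.mapDomain_zero]

lemma quasiReg_zero (f : G →₀ ℂ) : quasiReg H f (0 : (G ⧸ H) →₀ ℂ) = 0 := by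
  rw [quasiReg]
  simp [Finsupp.mapDomain_zero]

lemma conv_smul (f : G →₀ ℂ) (c : ℂ) (ϕ : G →₀ ℂ) : conv f (c • ϕ) = c • conv f ϕ := by
  rw [conv, conv, Finsupp.smul_sum]
  unfold Finsupp.sum
  refine Finset.sum_congr rfl fun z _ => ?_
  dsimp only
  rw [Finsupp.mapDomain_smul, smul_comm]

lemma quasiReg_smul (f : G →₀ ℂ) (c : ℂ) (ξ : (G ⧸ H) →₀ ℂ) :
    quasiReg H f (c • ξ) = c • quasiReg H f ξ := by
  rw [quasiReg, quasiReg, Finsupp.smul_sum]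
  unfold Finsupp.sum
  refine Finset.sum_congr rfl fun z _ => ?_
  dsimp only
  rw [Finsupp.mapDomain_smul, smul_comm]

lemma norm_mapDomain_le (g : G →₀ ℂ) {s : Finset G} (hs : g.support ⊆ s) (q : G ⧸ H) :
    ‖Finsupp.mapDomain π g q‖ ≤ ∑ x ∈ s, if π x = q then ‖g x‖ else 0 := by
  rw [mapDomain_apply_eq π g hs q]
  refine (norm_sum_le _ _).trans (le_of_eq (Finset.sum_congr rfl fun x _ => ?_))
  split_ifs <;> simp

lemma norm_mapDomain_of_nonneg {g : G →₀ ℂ} (hg : ∀ x, 0 ≤ g x) {s : Finset G}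
    (hs : g.support ⊆ s) (q : G ⧸ H) :
    ‖Finsupp.mapDomain π g q‖ = ∑ x ∈ s, if π x = q then ‖g x‖ else 0 := by
  rw [mapDomain_apply_eq π g hs q,
    norm_sum_of_nonneg (fun x _ => by split_ifs; exacts [hg x, le_refl 0])]
  exact Finset.sum_congr rfl fun x _ => by split_ifs <;> simp

lemma norm_P_absC (g : G →₀ ℂ) (q : G ⧸ H) :
    ‖Finsupp.mapDomain π (absC g) q‖ = ∑ x ∈ g.support, if π x = q then ‖g x‖ else 0 := by
  rw [norm_mapDomain_of_nonneg (absC_nonneg g) (le_of_eq (support_absC g)) q]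
  exact Finset.sum_congr rfl fun x _ => by split_ifs <;> simp

lemma norm_P_le_P_absC (g : G →₀ ℂ) (q : G ⧸ H) :
    ‖Finsupp.mapDomain π g q‖ ≤ ‖Finsupp.mapDomain π (absC g) q‖ := by
  rw [norm_P_absC]
  exact norm_mapDomain_le g (le_refl g.support) q

lemma l21_eq_l2P (g : G →₀ ℂ) :
    l21Norm H g = l2Norm (Finsupp.mapDomain π (absC g)) := by
  classical
  rw [l21Norm]
  have hs1 : (Finsupp.mapDomain π (g.mapRange norm norm_zero)).support ⊆ g.support.image π :=
    Finsupp.mapDomain_support.trans (Finset.image_subset_image Finsupp.support_mapRange)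
  have hs2 : (Finsupp.mapDomain π (absC g)).support ⊆ g.support.image π :=
    Finsupp.mapDomain_support.trans (le_of_eq (by rw [support_absC]))
  rw [l2Norm_eq_sum _ hs1, l2Norm_eq_sum _ hs2]
  congr 1
  refine Finset.sum_congr rfl fun q _ => ?_
  have h1 : ‖Finsupp.mapDomain π (g.mapRange norm norm_zero) q‖
      = ∑ x ∈ g.support, if π x = q then ‖g x‖ else 0 := by
    rw [mapDomain_apply_eq π _ Finsupp.support_mapRange q]
    simp only [Finsupp.mapRange_apply]
    rw [Real.norm_eq_abs,
      abs_of_nonneg (Finset.sum_nonneg fun x _ => by split_ifs; exacts [norm_nonneg _, le_rfl])]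
    exact Finset.sum_congr rfl fun x _ => by split_ifs <;> rfl
  rw [h1, norm_P_absC]

lemma l2Norm_quasiReg_le (f : G →₀ ℂ) (ξ : (G ⧸ H) →₀ ℂ) :
    l2Norm (quasiReg H f ξ) ≤ l1Norm f * l2Norm ξ := by
  rw [quasiReg, Finsupp.sum]
  refine (l2Norm_sum_le _ _).trans (le_of_eq ?_)
  rw [l1Norm, Finset.sum_mul]
  refine Finset.sum_congr rfl fun z _ => ?_
  rw [l2Norm_smul, l2Norm_mapDomain_inj (MulAction.injective z)]

lemma l2Norm_conv_le (f ξ : G →₀ ℂ) :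
    l2Norm (conv f ξ) ≤ l1Norm f * l2Norm ξ := by
  rw [conv, Finsupp.sum]
  refine (l2Norm_sum_le _ _).trans (le_of_eq ?_)
  rw [l1Norm, Finset.sum_mul]
  refine Finset.sum_congr rfl fun z _ => ?_
  rw [l2Norm_smul, l2Norm_mapDomain_inj (mul_right_injective z)]

lemma l21Norm_nonneg (g : G →₀ ℂ) : 0 ≤ l21Norm H g := Real.sqrt_nonneg _

lemma l21Norm_smul (c : ℂ) (ϕ : G →₀ ℂ) : l21Norm H (c • ϕ) = ‖c‖ * l21Norm H ϕ := by
  rw [l21_eq_l2P, l21_eq_l2P]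
  have habs : absC (c • ϕ) = ((‖c‖ : ℂ) : ℂ) • absC ϕ := by
    ext x
    rw [absC_apply, Finsupp.smul_apply, Finsupp.smul_apply, absC_apply, smul_eq_mul,
      smul_eq_mul, norm_mul, Complex.ofReal_mul]
  rw [habs, Finsupp.mapDomain_smul, l2Norm_smul, Complex.norm_real, norm_norm]

lemma l21_conv_le_quasi (f ϕ : G →₀ ℂ) :
    l21Norm H (conv f ϕ) ≤ l2Norm (quasiReg H (absC f) (Finsupp.mapDomain π (absC ϕ))) := by
  rw [l21_eq_l2P, ← mapDomain_conv]
  apply l2Norm_mono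
  intro q
  set u := conv f ϕ with hu
  set v := conv (absC f) (absC ϕ) with hv
  have hvx : ∀ x, v x = ((∑ z ∈ f.support, ‖f z‖ * ‖ϕ (z⁻¹ * x)‖ : ℝ) : ℂ) := by
    intro x
    rw [hv, conv_apply, support_absC]
    push_cast
    exact Finset.sum_congr rfl fun z _ => by rw [absC_apply, absC_apply]
  have hvnonneg : ∀ x, 0 ≤ v x := fun x => by
    rw [hvx x]
    exact_mod_cast Finset.sum_nonneg fun z _ => mul_nonneg (norm_nonneg _) (norm_nonneg _)
  have hnorm : ∀ x, ‖u x‖ ≤ ‖v x‖ := by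
    intro x
    have h1 : ‖u x‖ ≤ ∑ z ∈ f.support, ‖f z‖ * ‖ϕ (z⁻¹ * x)‖ := by
      rw [hu, conv_apply]
      refine (norm_sum_le _ _).trans (le_of_eq ?_)
      exact Finset.sum_congr rfl fun z _ => norm_mul _ _
    have h2 : ‖v x‖ = ∑ z ∈ f.support, ‖f z‖ * ‖ϕ (z⁻¹ * x)‖ := by
      rw [hvx x, Complex.norm_real, Real.norm_eq_abs,
        abs_of_nonneg (Finset.sum_nonneg fun z _ => mul_nonneg (norm_nonneg _) (norm_nonneg _))]
    rw [h2]
    exact h1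
  have hsupp : u.support ⊆ v.support := by
    intro x hx
    rw [Finsupp.mem_support_iff] at hx ⊢
    intro hvx0
    apply hx
    have := hnorm x
    rw [hvx0, norm_zero] at this
    exact norm_eq_zero.mp (le_antisymm this (norm_nonneg _))
  calc ‖Finsupp.mapDomain π (absC u) q‖
      = ∑ x ∈ u.support, if π x = q then ‖u x‖ else 0 := norm_P_absC u q
    _ = ∑ x ∈ v.support, if π x = q then ‖u x‖ else 0 := by
        apply Finset.sum_subset hsupp
        intro x _ hx
        rw [Finsupp.notMem_support_iff.mp hx]
        simp
    _ ≤ ∑ x ∈ v.support, if π x = q then ‖v x‖ else 0 := by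
        refine Finset.sum_le_sum fun x _ => ?_
        split_ifs
        · exact hnorm x
        · exact le_rfl
    _ = ‖Finsupp.mapDomain π v q‖ :=
        (norm_mapDomain_of_nonneg hvnonneg (le_refl v.support) q).symm

lemma l21_conv_le (f ϕ : G →₀ ℂ) : l21Norm H (conv f ϕ) ≤ l1Norm f * l21Norm H ϕ := by
  refine (l21_conv_le_quasi f ϕ).trans ?_
  refine (l2Norm_quasiReg_le _ _).trans (le_of_eq ?_)
  rw [l1Norm_absC, l21_eq_l2P]

lemma zero_mem_quasiSet (f : G →₀ ℂ) :
    (0 : ℝ) ∈ {c : ℝ | ∃ ξ : (G ⧸ H) →₀ ℂ, l2Norm ξ ≤ 1 ∧ c = l2Norm (quasiReg H f ξ)} :=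
  ⟨0, by rw [l2Norm_zero]; norm_num, by rw [quasiReg_zero, l2Norm_zero]⟩

lemma bddAbove_quasiSet (f : G →₀ ℂ) :
    BddAbove {c : ℝ | ∃ ξ : (G ⧸ H) →₀ ℂ, l2Norm ξ ≤ 1 ∧ c = l2Norm (quasiReg H f ξ)} := by
  refine ⟨l1Norm f, ?_⟩
  rintro c ⟨ξ, hξ, rfl⟩
  calc l2Norm (quasiReg H f ξ) ≤ l1Norm f * l2Norm ξ := l2Norm_quasiReg_le f ξ
    _ ≤ l1Norm f * 1 := mul_le_mul_of_nonneg_left hξ (l1Norm_nonneg f)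
    _ = l1Norm f := mul_one _

lemma quasiRegOpNorm_nonneg (f : G →₀ ℂ) : 0 ≤ quasiRegOpNorm H f :=
  le_csSup (bddAbove_quasiSet f) (zero_mem_quasiSet f)

lemma le_quasiRegOpNorm (f : G →₀ ℂ) (ξ : (G ⧸ H) →₀ ℂ) :
    l2Norm (quasiReg H f ξ) ≤ quasiRegOpNorm H f * l2Norm ξ := by
  rcases eq_or_lt_of_le (l2Norm_nonneg ξ) with h0 | h0
  · have h1 : l2Norm (quasiReg H f ξ) ≤ l1Norm f * l2Norm ξ := l2Norm_quasiReg_le f ξ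
    rw [← h0, mul_zero] at h1 ⊢
    exact le_antisymm h1 (l2Norm_nonneg _) ▸ le_rfl
  · set c : ℝ := (l2Norm ξ)⁻¹ with hc
    have hc0 : 0 < c := inv_pos.mpr h0
    have hmem : l2Norm (quasiReg H f ((c : ℂ) • ξ))
        ∈ {c : ℝ | ∃ ξ : (G ⧸ H) →₀ ℂ, l2Norm ξ ≤ 1 ∧ c = l2Norm (quasiReg H f ξ)} := by
      refine ⟨(c : ℂ) • ξ, ?_, rfl⟩
      rw [l2Norm_smul, Complex.norm_real, Real.norm_eq_abs, abs_of_nonneg hc0.le, hc,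
        inv_mul_cancel₀ (ne_of_gt h0)]
    have hle := le_csSup (bddAbove_quasiSet f) hmem
    rw [quasiReg_smul, l2Norm_smul, Complex.norm_real, Real.norm_eq_abs,
      abs_of_nonneg hc0.le, hc] at hle
    rw [mul_comm]
    exact (inv_mul_le_iff₀ h0).mp hle

lemma zero_mem_hybridSet (f : G →₀ ℂ) :
    (0 : ℝ) ∈ {c : ℝ | ∃ ϕ : G →₀ ℂ, l21Norm H ϕ ≤ 1 ∧ c = l21Norm H (conv f ϕ)} := by
  refine ⟨0, ?_, ?_⟩
  · rw [l21Norm, Finsupp.mapRange_zero, Finsupp.mapDomain_zero, l2Norm_zero]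
    norm_num
  · rw [conv_zero, l21Norm, Finsupp.mapRange_zero, Finsupp.mapDomain_zero, l2Norm_zero]

lemma bddAbove_hybridSet (f : G →₀ ℂ) :
    BddAbove {c : ℝ | ∃ ϕ : G →₀ ℂ, l21Norm H ϕ ≤ 1 ∧ c = l21Norm H (conv f ϕ)} := by
  refine ⟨l1Norm f, ?_⟩
  rintro c ⟨ϕ, hϕ, rfl⟩
  calc l21Norm H (conv f ϕ) ≤ l1Norm f * l21Norm H ϕ := l21_conv_le f ϕ
    _ ≤ l1Norm f * 1 := mul_le_mul_of_nonneg_left hϕ (l1Norm_nonneg f)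
    _ = l1Norm f := mul_one _

lemma hybridOpNorm_nonneg (f : G →₀ ℂ) : 0 ≤ hybridOpNorm H f :=
  le_csSup (bddAbove_hybridSet f) (zero_mem_hybridSet f)

lemma le_hybridOpNorm (f ϕ : G →₀ ℂ) :
    l21Norm H (conv f ϕ) ≤ hybridOpNorm H f * l21Norm H ϕ := by
  rcases eq_or_lt_of_le (l21Norm_nonneg ϕ) with h0 | h0
  · have h1 : l21Norm H (conv f ϕ) ≤ l1Norm f * l21Norm H ϕ := l21_conv_le f ϕ
    rw [← h0, mul_zero] at h1 ⊢
    exact le_antisymm h1 (l21Norm_nonneg _) ▸ le_rfl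
  · set c : ℝ := (l21Norm H ϕ)⁻¹ with hc
    have hc0 : 0 < c := inv_pos.mpr h0
    have hmem : l21Norm H (conv f ((c : ℂ) • ϕ))
        ∈ {c : ℝ | ∃ ϕ : G →₀ ℂ, l21Norm H ϕ ≤ 1 ∧ c = l21Norm H (conv f ϕ)} := by
      refine ⟨(c : ℂ) • ϕ, ?_, rfl⟩
      rw [l21Norm_smul, Complex.norm_real, Real.norm_eq_abs, abs_of_nonneg hc0.le, hc,
        inv_mul_cancel₀ (ne_of_gt h0)]
    have hle := le_csSup (bddAbove_hybridSet f) hmem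
    rw [conv_smul, l21Norm_smul, Complex.norm_real, Real.norm_eq_abs,
      abs_of_nonneg hc0.le, hc] at hle
    rw [mul_comm]
    exact (inv_mul_le_iff₀ h0).mp hle

lemma quasi_le_hybrid (f : G →₀ ℂ) : quasiRegOpNorm H f ≤ hybridOpNorm H f := by
  refine Real.sSup_le ?_ (hybridOpNorm_nonneg f)
  rintro c ⟨ξ, hξ, rfl⟩
  set σ : G ⧸ H → G := Quotient.out with hσdef
  have hσ : ∀ q : G ⧸ H, π (σ q) = q := fun q => QuotientGroup.out_eq' q
  have hinj : Function.Injective σ := fun a b h => by rw [← hσ a, ← hσ b, h]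
  set ϕ : G →₀ ℂ := Finsupp.mapDomain σ ξ with hϕ
  have hPϕ : Finsupp.mapDomain π ϕ = ξ := by
    rw [hϕ, ← Finsupp.mapDomain_comp]
    have hid : ((π : G → G ⧸ H) ∘ σ) = id := funext hσ
    rw [hid, Finsupp.mapDomain_id]
  have hl21 : l21Norm H ϕ = l2Norm ξ := by
    rw [l21_eq_l2P, hϕ, absC_mapDomain_inj hinj, ← Finsupp.mapDomain_comp]
    have hid : ((π : G → G ⧸ H) ∘ σ) = id := funext hσ
    rw [hid, Finsupp.mapDomain_id, l2Norm_absC]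
  calc l2Norm (quasiReg H f ξ)
      = l2Norm (Finsupp.mapDomain π (conv f ϕ)) := by rw [mapDomain_conv, hPϕ]
    _ ≤ l2Norm (Finsupp.mapDomain π (absC (conv f ϕ))) :=
        l2Norm_mono _ _ (fun q => norm_P_le_P_absC _ q)
    _ = l21Norm H (conv f ϕ) := (l21_eq_l2P _).symm
    _ ≤ hybridOpNorm H f * l21Norm H ϕ := le_hybridOpNorm f ϕ
    _ = hybridOpNorm H f * l2Norm ξ := by rw [hl21]
    _ ≤ hybridOpNorm H f * 1 := mul_le_mul_of_nonneg_left hξ (hybridOpNorm_nonneg f)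
    _ = hybridOpNorm H f := mul_one _

/-- The fiberwise ℓ² norm of `ξ`, as a function on the quotient. -/
noncomputable def fiberL2 (H : Subgroup G) (ξ : G →₀ ℂ) : (G ⧸ H) →₀ ℂ :=
  Finsupp.onFinset (ξ.support.image (QuotientGroup.mk : G → G ⧸ H))
    (fun q => ((Real.sqrt (∑ x ∈ ξ.support.filter
      (fun x => (QuotientGroup.mk x : G ⧸ H) = q), ‖ξ x‖ ^ 2) : ℝ) : ℂ))
    (fun q hq => by
      by_contra hq'
      apply hq
      have hemp : ξ.support.filter (fun x => (QuotientGroup.mk x : G ⧸ H) = q) = ∅ :=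
        Finset.filter_eq_empty_iff.mpr
          (fun {x} hx h => hq' (Finset.mem_image.mpr ⟨x, hx, h⟩))
      rw [hemp]
      simp)

lemma fiberL2_apply (ξ : G →₀ ℂ) (q : G ⧸ H) :
    fiberL2 H ξ q
      = ((Real.sqrt (∑ x ∈ ξ.support.filter (fun x => π x = q), ‖ξ x‖ ^ 2) : ℝ) : ℂ) := rfl

lemma fiberL2_nonneg (ξ : G →₀ ℂ) (q : G ⧸ H) : 0 ≤ fiberL2 H ξ q := by
  rw [fiberL2_apply]
  exact_mod_cast Real.sqrt_nonneg _

lemma norm_fiberL2 (ξ : G →₀ ℂ) (q : G ⧸ H) :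
    ‖fiberL2 H ξ q‖
      = Real.sqrt (∑ x ∈ ξ.support.filter (fun x => π x = q), ‖ξ x‖ ^ 2) := by
  rw [fiberL2_apply, Complex.norm_real, Real.norm_eq_abs, abs_of_nonneg (Real.sqrt_nonneg _)]

lemma l2Norm_fiberL2 (ξ : G →₀ ℂ) : l2Norm (fiberL2 H ξ) = l2Norm ξ := by
  classical
  have hs : (fiberL2 H ξ).support ⊆ ξ.support.image π := Finsupp.support_onFinset_subset
  rw [l2Norm_eq_sum _ hs]
  unfold l2Norm
  congr 1
  rw [← Finset.sum_fiberwise_of_maps_to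
    (fun x hx => Finset.mem_image_of_mem π hx) (fun x => ‖ξ x‖ ^ 2)]
  refine Finset.sum_congr rfl fun q _ => ?_
  rw [norm_fiberL2, Real.sq_sqrt (Finset.sum_nonneg fun _ _ => sq_nonneg _)]

lemma l2_conv_le_quasi_fiber {f : G →₀ ℂ} (hf : ∀ x, 0 ≤ f x) (ξ : G →₀ ℂ) :
    l2Norm (conv f ξ) ≤ l2Norm (quasiReg H f (fiberL2 H ξ)) := by
  classical
  set T := (conv f ξ).support with hT
  set Q := T.image π with hQ
  set w := quasiReg H f (fiberL2 H ξ) with hw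
  have claim : ∀ q ∈ Q, ∑ x ∈ T.filter (fun x => π x = q), ‖conv f ξ x‖ ^ 2 ≤ ‖w q‖ ^ 2 := by
    intro q _
    set Tq := T.filter (fun x => π x = q) with hTq
    have hTqq : ∀ x ∈ Tq, π x = q := fun x hx => (Finset.mem_filter.mp hx).2
    -- Minkowski inequality in the Euclidean space indexed by `Tq`
    have mink : Real.sqrt (∑ x ∈ Tq, ‖conv f ξ x‖ ^ 2)
        ≤ ∑ z ∈ f.support, ‖f z‖ * Real.sqrt (∑ x ∈ Tq, ‖ξ (z⁻¹ * x)‖ ^ 2) := by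
      set v : G → EuclideanSpace ℂ {x // x ∈ Tq} :=
        fun z => WithLp.toLp 2 (fun x : {x // x ∈ Tq} => f z * ξ (z⁻¹ * ↑x)) with hv
      have hnv : ∀ z : G, ‖v z‖ = ‖f z‖ * Real.sqrt (∑ x ∈ Tq, ‖ξ (z⁻¹ * x)‖ ^ 2) := by
        intro z
        rw [EuclideanSpace.norm_eq]
        have hterm : ∀ x : {x // x ∈ Tq}, ‖v z x‖ ^ 2 = ‖f z‖ ^ 2 * ‖ξ (z⁻¹ * ↑x)‖ ^ 2 :=
          fun x => by rw [hv]; dsimp only; rw [norm_mul]; ring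
        rw [Finset.sum_congr rfl (fun x _ => hterm x), ← Finset.mul_sum,
          Real.sqrt_mul (sq_nonneg _), Real.sqrt_sq (norm_nonneg _)]
        exact congrArg (fun t => ‖f z‖ * Real.sqrt t) (Finset.sum_coe_sort Tq (fun x => ‖ξ (z⁻¹ * x)‖ ^ 2))
      have hsum : (∑ z ∈ f.support, v z)
          = (fun x : {x // x ∈ Tq} => conv f ξ ↑x) := by
        funext x
        rw [WithLp.ofLp_sum, Finset.sum_apply, conv_apply]
      have h1 : Real.sqrt (∑ x ∈ Tq, ‖conv f ξ x‖ ^ 2) = ‖∑ z ∈ f.support, v z‖ := by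
        rw [EuclideanSpace.norm_eq, hsum, ← Finset.sum_coe_sort Tq (fun x => ‖conv f ξ x‖ ^ 2)]
      rw [h1]
      refine (norm_sum_le _ _).trans (le_of_eq (Finset.sum_congr rfl fun z _ => hnv z))
    have step2 : ∀ z : G, Real.sqrt (∑ x ∈ Tq, ‖ξ (z⁻¹ * x)‖ ^ 2)
        ≤ ‖fiberL2 H ξ (z⁻¹ • q)‖ := by
      intro z
      rw [norm_fiberL2]
      apply Real.sqrt_le_sqrt
      have hinj : Function.Injective (fun x : G => z⁻¹ * x) := mul_right_injective z⁻¹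
      have himg : ∑ x ∈ Tq, ‖ξ (z⁻¹ * x)‖ ^ 2
          = ∑ y ∈ Tq.image (fun x => z⁻¹ * x), ‖ξ y‖ ^ 2 := by
        rw [Finset.sum_image (fun a _ b _ h => hinj h)]
      rw [himg]
      have hmem : ∀ y ∈ Tq.image (fun x => z⁻¹ * x), (π y : G ⧸ H) = z⁻¹ • q := by
        intro y hy
        obtain ⟨x, hx, rfl⟩ := Finset.mem_image.mp hy
        rw [← hTqq x hx]
        exact (MulAction.Quotient.smul_mk H z⁻¹ x)
      have hzero : ∑ y ∈ Tq.image (fun x => z⁻¹ * x), ‖ξ y‖ ^ 2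
          = ∑ y ∈ (Tq.image (fun x => z⁻¹ * x)) ∩ ξ.support, ‖ξ y‖ ^ 2 := by
        symm
        apply Finset.sum_subset Finset.inter_subset_left
        intro y hy hy'
        have : y ∉ ξ.support := fun hys => hy' (Finset.mem_inter.mpr ⟨hy, hys⟩)
        rw [Finsupp.notMem_support_iff.mp this]
        simp
      rw [hzero]
      apply Finset.sum_le_sum_of_subset_of_nonneg
      · intro y hy
        obtain ⟨hy1, hy2⟩ := Finset.mem_inter.mp hy
        exact Finset.mem_filter.mpr ⟨hy2, hmem y hy1⟩
      · intro y _ _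
        exact sq_nonneg _
    have step3 : ‖w q‖ = ∑ z ∈ f.support, ‖f z‖ * ‖fiberL2 H ξ (z⁻¹ • q)‖ := by
      rw [hw, quasiReg_apply,
        norm_sum_of_nonneg (fun z _ => mul_nonneg (hf z) (fiberL2_nonneg ξ _))]
      exact Finset.sum_congr rfl fun z _ => norm_mul _ _
    have hA : Real.sqrt (∑ x ∈ Tq, ‖conv f ξ x‖ ^ 2) ≤ ‖w q‖ := by
      rw [step3]
      refine mink.trans (Finset.sum_le_sum fun z _ => ?_)
      exact mul_le_mul_of_nonneg_left (step2 z) (norm_nonneg _)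
    calc ∑ x ∈ Tq, ‖conv f ξ x‖ ^ 2
        = (Real.sqrt (∑ x ∈ Tq, ‖conv f ξ x‖ ^ 2)) ^ 2 :=
          (Real.sq_sqrt (Finset.sum_nonneg fun _ _ => sq_nonneg _)).symm
      _ ≤ ‖w q‖ ^ 2 := pow_le_pow_left₀ (Real.sqrt_nonneg _) hA 2
  calc l2Norm (conv f ξ)
      = Real.sqrt (∑ x ∈ T, ‖conv f ξ x‖ ^ 2) := by rw [l2Norm_eq_sum _ (le_of_eq hT.symm)]
    _ = Real.sqrt (∑ q ∈ Q, ∑ x ∈ T.filter (fun x => π x = q), ‖conv f ξ x‖ ^ 2) := by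
        rw [Finset.sum_fiberwise_of_maps_to
          (fun x hx => Finset.mem_image_of_mem π hx) (fun x => ‖conv f ξ x‖ ^ 2)]
    _ ≤ Real.sqrt (∑ q ∈ Q, ‖w q‖ ^ 2) :=
        Real.sqrt_le_sqrt (Finset.sum_le_sum claim)
    _ ≤ Real.sqrt (∑ q ∈ Q ∪ w.support, ‖w q‖ ^ 2) :=
        Real.sqrt_le_sqrt (Finset.sum_le_sum_of_subset_of_nonneg
          Finset.subset_union_left (fun _ _ _ => sq_nonneg _))
    _ = l2Norm w := (l2Norm_eq_sum w Finset.subset_union_right).symm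

lemma zero_mem_regSet (f : G →₀ ℂ) :
    (0 : ℝ) ∈ {c : ℝ | ∃ ξ : G →₀ ℂ, l2Norm ξ ≤ 1 ∧ c = l2Norm (conv f ξ)} :=
  ⟨0, by rw [l2Norm_zero]; norm_num, by rw [conv_zero, l2Norm_zero]⟩

lemma bddAbove_regSet (f : G →₀ ℂ) :
    BddAbove {c : ℝ | ∃ ξ : G →₀ ℂ, l2Norm ξ ≤ 1 ∧ c = l2Norm (conv f ξ)} := by
  refine ⟨l1Norm f, ?_⟩
  rintro c ⟨ξ, hξ, rfl⟩
  calc l2Norm (conv f ξ) ≤ l1Norm f * l2Norm ξ := l2Norm_conv_le f ξ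
    _ ≤ l1Norm f * 1 := mul_le_mul_of_nonneg_left hξ (l1Norm_nonneg f)
    _ = l1Norm f := mul_one _

lemma regOpNorm_nonneg (f : G →₀ ℂ) : 0 ≤ regOpNorm f :=
  le_csSup (bddAbove_regSet f) (zero_mem_regSet f)

lemma l2_le_l21 (g : G →₀ ℂ) : l2Norm g ≤ l21Norm H g := by
  classical
  rw [l21_eq_l2P]
  have hsK : (Finsupp.mapDomain π (absC g)).support ⊆ g.support.image π :=
    Finsupp.mapDomain_support.trans (le_of_eq (by rw [support_absC]))
  rw [l2Norm_eq_sum _ hsK]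
  unfold l2Norm
  apply Real.sqrt_le_sqrt
  rw [← Finset.sum_fiberwise_of_maps_to
    (fun x hx => Finset.mem_image_of_mem π hx) (fun x => ‖g x‖ ^ 2)]
  refine Finset.sum_le_sum fun q _ => ?_
  have h1 : ‖Finsupp.mapDomain π (absC g) q‖ ^ 2
      = (∑ x ∈ g.support.filter (fun x => π x = q), ‖g x‖) ^ 2 := by
    rw [norm_P_absC, Finset.sum_filter]
  rw [h1]
  exact Finset.sum_sq_le_sq_sum_of_nonneg (fun _ _ => norm_nonneg _)

lemma absC_toC {f : G →₀ ℝ} (hf : ∀ x, 0 ≤ f x) : absC (toC f) = toC f := by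
  ext x
  rw [absC_apply]
  have h1 : toC f x = ((f x : ℝ) : ℂ) := Finsupp.mapRange_apply
  rw [h1, Complex.norm_real, Real.norm_eq_abs, abs_of_nonneg (hf x)]

end Aux

section MainProof
open ComplexOrder

/-- if the quasi-regular representation is weakly contained in the
regular one, then `‖f‖_* = ‖f‖_h` on nonnegative functions, and rapid decay of
`G` implies rapid decay of the pair `(G,H)`. -/
theorem statement4 {G : Type*} [Group G] (S : Set G) (hfin : S.Finite)
    (hsym : ∀ s ∈ S, s⁻¹ ∈ S) (hgen : Subgroup.closure S = ⊤) (H : Subgroup G)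
    (hwc : ∀ f : G →₀ ℂ, quasiRegOpNorm H f ≤ regOpNorm f) :
    (∀ f : G →₀ ℝ, (∀ x, 0 ≤ f x) → regOpNorm (toC f) = hybridOpNorm H (toC f)) ∧
    (GroupRD S → PairRD S H) := by
  constructor
  · intro f hf
    have habs : absC (toC f) = toC f := absC_toC hf
    have hpos : ∀ x, (0 : ℂ) ≤ toC f x := fun x => by
      rw [← habs]; exact absC_nonneg _ x
    apply le_antisymm
    · refine Real.sSup_le ?_ (hybridOpNorm_nonneg (toC f))
      rintro c ⟨ξ, hξ, rfl⟩
      calc l2Norm (conv (toC f) ξ)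
          ≤ l2Norm (quasiReg H (toC f) (fiberL2 H ξ)) := l2_conv_le_quasi_fiber hpos ξ
        _ ≤ quasiRegOpNorm H (toC f) * l2Norm (fiberL2 H ξ) := le_quasiRegOpNorm _ _
        _ = quasiRegOpNorm H (toC f) * l2Norm ξ := by rw [l2Norm_fiberL2]
        _ ≤ quasiRegOpNorm H (toC f) * 1 :=
            mul_le_mul_of_nonneg_left hξ (quasiRegOpNorm_nonneg _)
        _ = quasiRegOpNorm H (toC f) := mul_one _
        _ ≤ hybridOpNorm H (toC f) := quasi_le_hybrid _
    · refine Real.sSup_le ?_ (regOpNorm_nonneg (toC f))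
      rintro c ⟨ϕ, hϕ, rfl⟩
      calc l21Norm H (conv (toC f) ϕ)
          ≤ l2Norm (quasiReg H (absC (toC f))
              (Finsupp.mapDomain (QuotientGroup.mk : G → G ⧸ H) (absC ϕ))) :=
            l21_conv_le_quasi _ _
        _ = l2Norm (quasiReg H (toC f)
              (Finsupp.mapDomain (QuotientGroup.mk : G → G ⧸ H) (absC ϕ))) := by rw [habs]
        _ ≤ quasiRegOpNorm H (toC f)
              * l2Norm (Finsupp.mapDomain (QuotientGroup.mk : G → G ⧸ H) (absC ϕ)) :=
            le_quasiRegOpNorm _ _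
        _ = quasiRegOpNorm H (toC f) * l21Norm H ϕ := by rw [← l21_eq_l2P]
        _ ≤ regOpNorm (toC f) * l21Norm H ϕ :=
            mul_le_mul_of_nonneg_right (hwc _) (l21Norm_nonneg _)
        _ ≤ regOpNorm (toC f) * 1 := mul_le_mul_of_nonneg_left hϕ (regOpNorm_nonneg _)
        _ = regOpNorm (toC f) := mul_one _
  · rintro ⟨C, D, hC, hRD⟩
    refine ⟨C, D, hC, ?_⟩
    intro R f ϕ hsupp
    have hCD : (0 : ℝ) ≤ C * ((R : ℝ) + 1) ^ D :=
      mul_nonneg hC (pow_nonneg (by positivity) D)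
    have hsupp' : supportedInBall S R (absC f) := by
      intro x hx
      rw [support_absC] at hx
      exact hsupp x hx
    have hreg : regOpNorm (absC f) ≤ C * ((R : ℝ) + 1) ^ D * l2Norm (absC f) := by
      refine Real.sSup_le ?_ (mul_nonneg hCD (l2Norm_nonneg _))
      rintro c ⟨ξ, hξ, rfl⟩
      calc l2Norm (conv (absC f) ξ)
          ≤ C * ((R : ℝ) + 1) ^ D * l2Norm (absC f) * l2Norm ξ := hRD R (absC f) ξ hsupp'
        _ ≤ C * ((R : ℝ) + 1) ^ D * l2Norm (absC f) * 1 :=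
            mul_le_mul_of_nonneg_left hξ (mul_nonneg hCD (l2Norm_nonneg _))
        _ = C * ((R : ℝ) + 1) ^ D * l2Norm (absC f) := mul_one _
    calc l21Norm H (conv f ϕ)
        ≤ l2Norm (quasiReg H (absC f)
            (Finsupp.mapDomain (QuotientGroup.mk : G → G ⧸ H) (absC ϕ))) :=
          l21_conv_le_quasi f ϕ
      _ ≤ quasiRegOpNorm H (absC f)
            * l2Norm (Finsupp.mapDomain (QuotientGroup.mk : G → G ⧸ H) (absC ϕ)) :=
          le_quasiRegOpNorm _ _
      _ = quasiRegOpNorm H (absC f) * l21Norm H ϕ := by rw [← l21_eq_l2P]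
      _ ≤ regOpNorm (absC f) * l21Norm H ϕ :=
          mul_le_mul_of_nonneg_right (hwc _) (l21Norm_nonneg _)
      _ ≤ C * ((R : ℝ) + 1) ^ D * l2Norm (absC f) * l21Norm H ϕ :=
          mul_le_mul_of_nonneg_right hreg (l21Norm_nonneg _)
      _ ≤ C * ((R : ℝ) + 1) ^ D * l21Norm H f * l21Norm H ϕ := by
          refine mul_le_mul_of_nonneg_right ?_ (l21Norm_nonneg _)
          refine mul_le_mul_of_nonneg_left ?_ hCD
          rw [l2Norm_absC]
          exact l2_le_l21 f

end MainProof
end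

section
/- Let G be a group generated by a finite symmetric set S with word length ℓ, and let H ⊴ G be a normal subgroup, so Q = G/H is a group generated by the image of S, with word length ℓ_Q. Then the pair (G,H) has the rapid decay property if and only if the quotient group Q has the rapid decay property. -/
open scoped BigOperators

attribute [local instance] Classical.propDecidable

section Aux

open Finsupp

variable {G : Type*} [Group G]

-- pointwise formula for conv
lemma s9_conv_apply {k : Type*} [Semiring k] (f ϕ : G →₀ k) (x : G) :
    conv f ϕ x = ∑ z ∈ f.support, f z * ϕ (z⁻¹ * x) := by
  unfold conv
  rw [Finsupp.sum_apply]
  refine Finset.sum_congr rfl fun z _ => ?_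
  show (f z • Finsupp.mapDomain (fun y => z * y) ϕ) x = _
  rw [Finsupp.smul_apply]
  have hinj : Function.Injective (fun y : G => z * y) := fun a b h => by
    simpa using h
  have hx : x = (fun y : G => z * y) (z⁻¹ * x) := by
    simp [mul_assoc]
  rw [hx, Finsupp.mapDomain_apply hinj]
  simp [smul_eq_mul]

lemma s9_conv_eq_mul {k : Type*} [Semiring k] (f ϕ : MonoidAlgebra k G) :
    conv f.coeff ϕ.coeff = (f * ϕ).coeff := by
  rw [MonoidAlgebra.mul_def]
  unfold conv
  rw [MonoidAlgebra.coeff_finsuppSum]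
  refine Finsupp.sum_congr fun z _ => ?_
  rw [MonoidAlgebra.coeff_finsuppSum]
  rw [Finsupp.mapDomain, Finsupp.smul_sum]
  refine Finsupp.sum_congr fun a _ => ?_
  rw [Finsupp.smul_single, smul_eq_mul]
  rfl

lemma s9_mapDomain_conv {k : Type*} [Semiring k] {Q : Type*} [Group Q]
    (π : G →* Q) (f ϕ : G →₀ k) :
    Finsupp.mapDomain π (conv f ϕ) = conv (Finsupp.mapDomain π f) (Finsupp.mapDomain π ϕ) := by
  have h2 : (MonoidAlgebra.ofCoeff f * MonoidAlgebra.ofCoeff ϕ).coeff = conv f ϕ :=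
    (s9_conv_eq_mul _ _).symm
  calc Finsupp.mapDomain π (conv f ϕ)
      = (MonoidAlgebra.mapDomain π
          (MonoidAlgebra.ofCoeff f * MonoidAlgebra.ofCoeff ϕ)).coeff := by rw [← h2]; rfl
    _ = _ := by rw [MonoidAlgebra.mapDomain_mul, ← s9_conv_eq_mul]; rfl

-- mapDomain applied, as a sum over any superset of the support
lemma s9_mapDomain_apply {α β M : Type*} [AddCommMonoid M] (h : α → β) (v : α →₀ M)
    {s : Finset α} (hs : v.support ⊆ s) (b : β) :
    Finsupp.mapDomain h v b = ∑ x ∈ s, if h x = b then v x else 0 := by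
  classical
  rw [Finsupp.mapDomain, Finsupp.sum_apply]
  rw [Finsupp.sum]
  rw [Finset.sum_subset hs (fun x _ hx => by
    rw [Finsupp.notMem_support_iff.mp hx]; simp)]
  refine Finset.sum_congr rfl fun x _ => ?_
  rw [Finsupp.single_apply]

lemma s9_l2Norm_sum_eq {α k : Type*} [NormedAddCommGroup k] (f : α →₀ k)
    {s : Finset α} (hs : f.support ⊆ s) :
    l2Norm f = Real.sqrt (∑ x ∈ s, ‖f x‖ ^ 2) := by
  unfold l2Norm
  rw [Finset.sum_subset hs (fun x _ hx => by
    rw [Finsupp.notMem_support_iff.mp hx]; simp)]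

lemma s9_l2Norm_le {α k₁ k₂ : Type*} [NormedAddCommGroup k₁] [NormedAddCommGroup k₂]
    {p : α →₀ k₁} {q : α →₀ k₂} (h : ∀ a, ‖p a‖ ≤ ‖q a‖) : l2Norm p ≤ l2Norm q := by
  have hsub : p.support ⊆ q.support := by
    intro a ha
    rw [Finsupp.mem_support_iff] at ha ⊢
    intro hq
    have := h a
    rw [hq, norm_zero] at this
    exact ha (norm_le_zero_iff.mp this)
  rw [s9_l2Norm_sum_eq p hsub]
  unfold l2Norm
  apply Real.sqrt_le_sqrt
  refine Finset.sum_le_sum fun a _ => ?_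
  exact pow_le_pow_left₀ (norm_nonneg _) (h a) 2

lemma s9_l2Norm_eq {α k₁ k₂ : Type*} [NormedAddCommGroup k₁] [NormedAddCommGroup k₂]
    {p : α →₀ k₁} {q : α →₀ k₂} (h : ∀ a, ‖p a‖ = ‖q a‖) : l2Norm p = l2Norm q :=
  le_antisymm (s9_l2Norm_le fun a => (h a).le) (s9_l2Norm_le fun a => (h a).ge)

lemma s9_support_mapRange_norm {α k : Type*} [NormedAddCommGroup k] (f : α →₀ k) :
    (f.mapRange norm norm_zero).support = f.support := by
  ext a
  simp [Finsupp.mem_support_iff, norm_eq_zero]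

lemma s9_support_toC {α : Type*} (f : α →₀ ℝ) : (toC f).support = f.support := by
  ext a
  simp [toC, Finsupp.mem_support_iff, Complex.ofReal_eq_zero]

lemma s9_l2Norm_toC {α : Type*} (f : α →₀ ℝ) : l2Norm (toC f) = l2Norm f :=
  s9_l2Norm_eq fun a => by simp [toC, Complex.norm_real]

lemma s9_l2Norm_mapRange_norm {α k : Type*} [NormedAddCommGroup k] (f : α →₀ k) :
    l2Norm (f.mapRange norm norm_zero) = l2Norm f :=
  s9_l2Norm_eq fun a => by simp

lemma s9_toC_conv (a b : G →₀ ℝ) : toC (conv a b) = conv (toC a) (toC b) := by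
  ext x
  have h1 : (toC (conv a b)) x = ((conv a b x : ℝ) : ℂ) := rfl
  rw [h1, s9_conv_apply, s9_conv_apply, s9_support_toC]
  push_cast
  refine Finset.sum_congr rfl fun z _ => ?_
  rfl

lemma s9_conv_nonneg {a b : G →₀ ℝ} (ha : ∀ x, 0 ≤ a x) (hb : ∀ x, 0 ≤ b x) (x : G) :
    0 ≤ conv a b x := by
  rw [s9_conv_apply]
  exact Finset.sum_nonneg fun z _ => mul_nonneg (ha z) (hb _)

lemma s9_norm_conv_le (f ϕ : G →₀ ℂ) (x : G) :
    ‖conv f ϕ x‖ ≤ conv (f.mapRange norm norm_zero) (ϕ.mapRange norm norm_zero) x := by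
  rw [s9_conv_apply, s9_conv_apply, s9_support_mapRange_norm]
  refine (norm_sum_le _ _).trans_eq ?_
  refine Finset.sum_congr rfl fun z _ => ?_
  rw [norm_mul]
  rfl

lemma s9_mapDomain_nonneg {α β : Type*} (h : α → β) {v : α →₀ ℝ} (hv : ∀ x, 0 ≤ v x) (b : β) :
    0 ≤ Finsupp.mapDomain h v b := by
  rw [s9_mapDomain_apply h v (le_refl v.support) b]
  refine Finset.sum_nonneg fun x _ => ?_
  split <;> simp [hv x]

end Aux

section Word

variable {G : Type*} [Group G]

lemma s9_exists_word {S : Set G} (hsym : ∀ s ∈ S, s⁻¹ ∈ S)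
    (hgen : Subgroup.closure S = ⊤) (x : G) :
    ∃ l : List G, (∀ s ∈ l, s ∈ S) ∧ l.prod = x := by
  have hx : x ∈ Submonoid.closure (S ∪ S⁻¹) := by
    rw [← Subgroup.closure_toSubmonoid, hgen]
    trivial
  obtain ⟨l, hl, hp⟩ := Submonoid.exists_list_of_mem_closure hx
  refine ⟨l, fun s hs => ?_, hp⟩
  rcases hl s hs with h | h
  · exact h
  · have h2 : s⁻¹ ∈ S := Set.mem_inv.mp h
    simpa using hsym _ h2

lemma s9_wordLength_le {S : Set G} (l : List G) (hl : ∀ s ∈ l, s ∈ S) :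
    wordLength S l.prod ≤ l.length :=
  Nat.sInf_le ⟨l, hl, rfl, rfl⟩

lemma s9_wordLength_spec {S : Set G} (hsym : ∀ s ∈ S, s⁻¹ ∈ S)
    (hgen : Subgroup.closure S = ⊤) (x : G) :
    ∃ l : List G, (∀ s ∈ l, s ∈ S) ∧ l.length = wordLength S x ∧ l.prod = x := by
  have hne : {n | ∃ l : List G, (∀ s ∈ l, s ∈ S) ∧ l.length = n ∧ l.prod = x}.Nonempty := by
    obtain ⟨l, hl, hp⟩ := s9_exists_word hsym hgen x
    exact ⟨l.length, l, hl, rfl, hp⟩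
  have h := Nat.sInf_mem hne
  exact h

lemma s9_map_prod (H : Subgroup G) [H.Normal] (l : List G) :
    (l.map (QuotientGroup.mk : G → G ⧸ H)).prod = QuotientGroup.mk l.prod := by
  induction l with
  | nil => simp
  | cons a t ih => simp [ih]

lemma s9_hsymQ {S : Set G} (hsym : ∀ s ∈ S, s⁻¹ ∈ S) (H : Subgroup G) [H.Normal] :
    ∀ t ∈ (QuotientGroup.mk : G → G ⧸ H) '' S, t⁻¹ ∈ (QuotientGroup.mk : G → G ⧸ H) '' S := by
  rintro t ⟨s, hs, rfl⟩
  exact ⟨s⁻¹, hsym s hs, by simp⟩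

lemma s9_hgenQ {S : Set G} (hgen : Subgroup.closure S = ⊤) (H : Subgroup G) [H.Normal] :
    Subgroup.closure ((QuotientGroup.mk : G → G ⧸ H) '' S) = ⊤ := by
  have h1 := MonoidHom.map_closure (QuotientGroup.mk' H) S
  rw [hgen, Subgroup.map_top_of_surjective _ (QuotientGroup.mk'_surjective H)] at h1
  rw [QuotientGroup.coe_mk'] at h1
  exact h1.symm

lemma s9_wordLength_mk_le {S : Set G} (hsym : ∀ s ∈ S, s⁻¹ ∈ S)
    (hgen : Subgroup.closure S = ⊤) (H : Subgroup G) [H.Normal] (x : G) :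
    wordLength ((QuotientGroup.mk : G → G ⧸ H) '' S) (QuotientGroup.mk x) ≤ wordLength S x := by
  obtain ⟨l, hl, hlen, hprod⟩ := s9_wordLength_spec hsym hgen x
  have h1 : ∀ t ∈ l.map (QuotientGroup.mk : G → G ⧸ H),
      t ∈ (QuotientGroup.mk : G → G ⧸ H) '' S := by
    intro t ht
    rcases List.mem_map.mp ht with ⟨s, hs, rfl⟩
    exact ⟨s, hl s hs, rfl⟩
  have h3 := s9_wordLength_le (l.map (QuotientGroup.mk : G → G ⧸ H)) h1
  rwa [s9_map_prod, hprod, List.length_map, hlen] at h3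

lemma s9_exists_lift {S : Set G} (hsym : ∀ s ∈ S, s⁻¹ ∈ S)
    (hgen : Subgroup.closure S = ⊤) (H : Subgroup G) [H.Normal] (q : G ⧸ H) :
    ∃ x : G, QuotientGroup.mk x = q ∧
      wordLength S x ≤ wordLength ((QuotientGroup.mk : G → G ⧸ H) '' S) q := by
  obtain ⟨l, hl, hlen, hprod⟩ := s9_wordLength_spec (s9_hsymQ hsym H) (s9_hgenQ hgen H) q
  have hlift : ∀ m : List (G ⧸ H), (∀ t ∈ m, t ∈ (QuotientGroup.mk : G → G ⧸ H) '' S) →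
      ∃ l' : List G, (∀ s ∈ l', s ∈ S) ∧ l'.map (QuotientGroup.mk : G → G ⧸ H) = m := by
    intro m
    induction m with
    | nil => exact fun _ => ⟨[], by simp, rfl⟩
    | cons a t ih =>
      intro h
      obtain ⟨s, hs, hsa⟩ := h a (List.mem_cons_self)
      obtain ⟨l', hl', hmap⟩ := ih fun x hx => h x (List.mem_cons_of_mem a hx)
      refine ⟨s :: l', ?_, by simp [hmap, hsa]⟩
      intro u hu
      rcases List.mem_cons.mp hu with rfl | hu
      · exact hs
      · exact hl' u hu
  obtain ⟨l', hl', hmap⟩ := hlift l hl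
  refine ⟨l'.prod, ?_, ?_⟩
  · rw [← s9_map_prod H l', hmap, hprod]
  · have h1 := s9_wordLength_le l' hl'
    have h2 : l'.length = l.length := by rw [← hmap, List.length_map]
    rw [h2, hlen] at h1
    exact h1

-- quotient map kills convolution structure
lemma s9_mapDomain_mk_conv {k : Type*} [Semiring k] (H : Subgroup G) [H.Normal] (f ϕ : G →₀ k) :
    Finsupp.mapDomain (QuotientGroup.mk : G → G ⧸ H) (conv f ϕ)
      = conv (Finsupp.mapDomain (QuotientGroup.mk : G → G ⧸ H) f)
          (Finsupp.mapDomain (QuotientGroup.mk : G → G ⧸ H) ϕ) := by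
  have h := s9_mapDomain_conv (QuotientGroup.mk' H) f ϕ
  rwa [QuotientGroup.coe_mk'] at h

lemma s9_mapDomain_section {M : Type*} [AddCommMonoid M] (H : Subgroup G) [H.Normal]
    {σ : G ⧸ H → G} (hσ : ∀ q, (QuotientGroup.mk (σ q) : G ⧸ H) = q) (ψ : (G ⧸ H) →₀ M) :
    Finsupp.mapDomain (QuotientGroup.mk : G → G ⧸ H) (Finsupp.mapDomain σ ψ) = ψ := by
  rw [← Finsupp.mapDomain_comp]
  have h : (QuotientGroup.mk : G → G ⧸ H) ∘ σ = id := funext hσ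
  rw [h, Finsupp.mapDomain_id]

lemma s9_l2_mapDomain_le_l21 (H : Subgroup G) [H.Normal] (g : G →₀ ℂ) :
    l2Norm (Finsupp.mapDomain (QuotientGroup.mk : G → G ⧸ H) g) ≤ l21Norm H g := by
  unfold l21Norm
  apply s9_l2Norm_le
  intro q
  rw [s9_mapDomain_apply (QuotientGroup.mk : G → G ⧸ H) g (le_refl g.support) q,
    s9_mapDomain_apply (QuotientGroup.mk : G → G ⧸ H) (g.mapRange norm norm_zero)
      (s9_support_mapRange_norm g).le q]
  refine le_trans (norm_sum_le _ _)
    (le_trans ?_ ((le_abs_self _).trans_eq (Real.norm_eq_abs _).symm))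
  refine Finset.sum_le_sum fun x _ => ?_
  split
  · rw [Finsupp.mapRange_apply]
  · simp

lemma s9_l21_mapDomain_section (H : Subgroup G) [H.Normal]
    {σ : G ⧸ H → G} (hσ : ∀ q, (QuotientGroup.mk (σ q) : G ⧸ H) = q) (ψ : (G ⧸ H) →₀ ℂ) :
    l21Norm H (Finsupp.mapDomain σ ψ) = l2Norm ψ := by
  have hinj : Function.Injective σ := fun a b h => by rw [← hσ a, ← hσ b, h]
  have hmr : (Finsupp.mapDomain σ ψ).mapRange norm norm_zero
      = Finsupp.mapDomain σ (ψ.mapRange norm norm_zero) := by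
    have h := Finsupp.embDomain_mapRange ⟨σ, hinj⟩ norm ψ norm_zero
    simp only [Finsupp.embDomain_eq_mapDomain, Function.Embedding.coeFn_mk] at h
    exact h.symm
  unfold l21Norm
  rw [hmr, s9_mapDomain_section H hσ, s9_l2Norm_mapRange_norm]

end Word


/-- for a normal subgroup `H ⊴ G`, the pair `(G,H)` has rapid
decay iff the quotient group `Q = G/H` (with the generating set `π(S)`) has
rapid decay. -/
theorem statement9 {G : Type*} [Group G] (S : Set G) (hfin : S.Finite)
    (hsym : ∀ s ∈ S, s⁻¹ ∈ S) (hgen : Subgroup.closure S = ⊤)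
    (H : Subgroup G) [H.Normal] :
    PairRD S H ↔ GroupRD ((QuotientGroup.mk : G → G ⧸ H) '' S) := by
  constructor
  · rintro ⟨C, D, hC, hRD⟩
    refine ⟨C, D, hC, ?_⟩
    intro R F Φ hF
    choose σ hσ1 hσ2 using fun q => s9_exists_lift hsym hgen H q
    set f := Finsupp.mapDomain σ F with hfdef
    set φ := Finsupp.mapDomain σ Φ with hφdef
    have hconv : conv F Φ
        = Finsupp.mapDomain (QuotientGroup.mk : G → G ⧸ H) (conv f φ) := by
      rw [s9_mapDomain_mk_conv, hfdef, hφdef, s9_mapDomain_section H hσ1,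
        s9_mapDomain_section H hσ1]
    have hfsupp : supportedInBall S R f := by
      intro x hx
      rw [hfdef] at hx
      have hx2 := Finsupp.mapDomain_support hx
      rcases Finset.mem_image.mp hx2 with ⟨q, hq, rfl⟩
      exact le_trans (hσ2 q) (hF q hq)
    calc l2Norm (conv F Φ)
        = l2Norm (Finsupp.mapDomain (QuotientGroup.mk : G → G ⧸ H) (conv f φ)) := by
          rw [hconv]
      _ ≤ l21Norm H (conv f φ) := s9_l2_mapDomain_le_l21 H _
      _ ≤ C * ((R : ℝ) + 1) ^ D * l21Norm H f * l21Norm H φ := hRD R f φ hfsupp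
      _ = C * ((R : ℝ) + 1) ^ D * l2Norm F * l2Norm Φ := by
          rw [hfdef, hφdef, s9_l21_mapDomain_section H hσ1, s9_l21_mapDomain_section H hσ1]
  · rintro ⟨C, D, hC, hRD⟩
    refine ⟨C, D, hC, ?_⟩
    intro R f φ hf
    set F := Finsupp.mapDomain (QuotientGroup.mk : G → G ⧸ H) (f.mapRange norm norm_zero)
      with hFdef
    set Φ := Finsupp.mapDomain (QuotientGroup.mk : G → G ⧸ H) (φ.mapRange norm norm_zero)
      with hΦdef
    have hFsupp : supportedInBall ((QuotientGroup.mk : G → G ⧸ H) '' S) R (toC F) := by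
      intro q hq
      rw [s9_support_toC, hFdef] at hq
      have hq2 := Finsupp.mapDomain_support hq
      rcases Finset.mem_image.mp hq2 with ⟨x, hx, rfl⟩
      rw [s9_support_mapRange_norm] at hx
      exact le_trans (s9_wordLength_mk_le hsym hgen H x) (hf x hx)
    have hmono : l21Norm H (conv f φ) ≤ l2Norm (conv F Φ) := by
      have hce : conv F Φ = Finsupp.mapDomain (QuotientGroup.mk : G → G ⧸ H)
          (conv (f.mapRange norm norm_zero) (φ.mapRange norm norm_zero)) := by
        rw [s9_mapDomain_mk_conv, hFdef, hΦdef]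
      rw [hce]
      unfold l21Norm
      apply s9_l2Norm_le
      intro q
      have hnn1 : ∀ x, 0 ≤ (f.mapRange norm norm_zero) x := fun x => by
        rw [Finsupp.mapRange_apply]; exact norm_nonneg _
      have hnn2 : ∀ x, 0 ≤ (φ.mapRange norm norm_zero) x := fun x => by
        rw [Finsupp.mapRange_apply]; exact norm_nonneg _
      have ha : 0 ≤ Finsupp.mapDomain (QuotientGroup.mk : G → G ⧸ H)
          ((conv f φ).mapRange norm norm_zero) q :=
        s9_mapDomain_nonneg _ (fun x => by
          rw [Finsupp.mapRange_apply]; exact norm_nonneg _) q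
      have hb : 0 ≤ Finsupp.mapDomain (QuotientGroup.mk : G → G ⧸ H)
          (conv (f.mapRange norm norm_zero) (φ.mapRange norm norm_zero)) q :=
        s9_mapDomain_nonneg _ (s9_conv_nonneg hnn1 hnn2) q
      rw [Real.norm_of_nonneg ha, Real.norm_of_nonneg hb]
      rw [s9_mapDomain_apply (QuotientGroup.mk : G → G ⧸ H)
          ((conv f φ).mapRange norm norm_zero)
          (Finset.subset_union_left (s₂ :=
            (conv (f.mapRange norm norm_zero) (φ.mapRange norm norm_zero)).support)) q,
        s9_mapDomain_apply (QuotientGroup.mk : G → G ⧸ H)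
          (conv (f.mapRange norm norm_zero) (φ.mapRange norm norm_zero))
          (Finset.subset_union_right (s₁ :=
            ((conv f φ).mapRange norm norm_zero).support)) q]
      refine Finset.sum_le_sum fun x _ => ?_
      split
      · rw [Finsupp.mapRange_apply]
        exact s9_norm_conv_le f φ x
      · exact le_refl 0
    have hstep2 : l2Norm (conv F Φ) = l2Norm (conv (toC F) (toC Φ)) := by
      rw [← s9_toC_conv, s9_l2Norm_toC]
    have hstep3 := hRD R (toC F) (toC Φ) hFsupp
    have hF2 : l2Norm (toC F) = l21Norm H f := by
      rw [s9_l2Norm_toC, hFdef]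
      rfl
    have hΦ2 : l2Norm (toC Φ) = l21Norm H φ := by
      rw [s9_l2Norm_toC, hΦdef]
      rfl
    calc l21Norm H (conv f φ) ≤ l2Norm (conv F Φ) := hmono
      _ = l2Norm (conv (toC F) (toC Φ)) := hstep2
      _ ≤ C * ((R : ℝ) + 1) ^ D * l2Norm (toC F) * l2Norm (toC Φ) := hstep3
      _ = C * ((R : ℝ) + 1) ^ D * l21Norm H f * l21Norm H φ := by rw [hF2, hΦ2]
end
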